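/- arXiv:2407.16399 — 2 statements merged into one kernel-verified Lean document; each statement's English description precedes it below -/
import Mathlib

section
/- Fix N ∈ ℕ, N ≥ 1, constants a ∈ ℝ, and σ : ℝ → ℝ Lipschitz with constant L₁ such that σ/σ' extends to a measurable function f with f(x)·σ'(x) = σ(x). Define the scheme x(0) = a and x(k+1) = x(k) + f(x(k))(exp{σ'(x(k)) Z_{k+1}/√N - σ'(x(k))²/(2N)} - 1), where Z₁,...,Z_N are i.i.d. standard Gaussians. Then for all k ≤ N, E[x(k)²] ≤ (1 + M₁ exp{L₁²/N}/N)^k (a² + 1) - 1, where M₁ satisfies σ(x)² ≤ M₁(1+x²) for all x. -/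
open MeasureTheory ProbabilityTheory Real Filter

lemma wick_pdf_shift (t z : ℝ) :
    rexp (t * z) * gaussianPDFReal 0 1 z = rexp (t ^ 2 / 2) * gaussianPDFReal t 1 z := by
  simp only [gaussianPDFReal, NNReal.coe_one, mul_one, sub_zero]
  rw [mul_left_comm, mul_left_comm (rexp (t ^ 2 / 2)), ← Real.exp_add, ← Real.exp_add]
  congr 2
  ring

lemma wick_pdf_meas : Measurable fun z => (gaussianPDFReal 0 1 z).toNNReal :=
  measurable_real_toNNReal.comp (measurable_gaussianPDFReal 0 1)

lemma wick_gaussian_eq : gaussianReal 0 1 =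
    MeasureTheory.Measure.withDensity volume
      (fun z => ((gaussianPDFReal 0 1 z).toNNReal : ENNReal)) := by
  rw [gaussianReal_of_var_ne_zero 0 one_ne_zero]
  rfl

lemma wick_integral_gaussian (h : ℝ → ℝ) :
    ∫ z, h z ∂(gaussianReal 0 1) = ∫ z, gaussianPDFReal 0 1 z * h z := by
  rw [wick_gaussian_eq, integral_withDensity_eq_integral_smul wick_pdf_meas]
  congr 1; ext z
  rw [NNReal.smul_def, Real.coe_toNNReal _ (gaussianPDFReal_nonneg 0 1 z), smul_eq_mul]

lemma wick_integrable_gaussian {h : ℝ → ℝ}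
    (hi : Integrable (fun z => gaussianPDFReal 0 1 z * h z) volume) :
    Integrable h (gaussianReal 0 1) := by
  rw [wick_gaussian_eq, integrable_withDensity_iff_integrable_smul wick_pdf_meas]
  refine hi.congr (Filter.Eventually.of_forall fun z => ?_)
  show _ = (gaussianPDFReal 0 1 z).toNNReal • h z
  rw [NNReal.smul_def, Real.coe_toNNReal _ (gaussianPDFReal_nonneg 0 1 z), smul_eq_mul]

lemma wick_integrable_exp (t : ℝ) :
    Integrable (fun z => rexp (t * z)) (gaussianReal 0 1) := by
  refine wick_integrable_gaussian ?_
  have : (fun z => gaussianPDFReal 0 1 z * rexp (t * z))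
      = fun z => rexp (t ^ 2 / 2) * gaussianPDFReal t 1 z := by
    ext z; rw [mul_comm, wick_pdf_shift]
  rw [this]
  exact (integrable_gaussianPDFReal t 1).const_mul _

lemma wick_integral_exp (t : ℝ) :
    ∫ z, rexp (t * z) ∂(gaussianReal 0 1) = rexp (t ^ 2 / 2) := by
  rw [wick_integral_gaussian]
  have : (fun z => gaussianPDFReal 0 1 z * rexp (t * z))
      = fun z => rexp (t ^ 2 / 2) * gaussianPDFReal t 1 z := by
    ext z; rw [mul_comm, wick_pdf_shift]
  rw [this, integral_const_mul, integral_gaussianPDFReal_eq_one t one_ne_zero, mul_one]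

lemma wick_integral_sq (A B t : ℝ) :
    Integrable (fun z => (A + B * rexp (t * z)) ^ 2) (gaussianReal 0 1) ∧
    ∫ z, (A + B * rexp (t * z)) ^ 2 ∂(gaussianReal 0 1)
      = A ^ 2 + 2 * A * B * rexp (t ^ 2 / 2) + B ^ 2 * rexp ((2 * t) ^ 2 / 2) := by
  have hexp : ∀ z, (A + B * rexp (t * z)) ^ 2
      = A ^ 2 + (2 * A * B) * rexp (t * z) + B ^ 2 * rexp ((2 * t) * z) := by
    intro z
    have h2 : rexp ((2 * t) * z) = rexp (t * z) * rexp (t * z) := by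
      rw [← Real.exp_add]; congr 1; ring
    rw [h2]; ring
  have hi1 := (wick_integrable_exp t).const_mul (2 * A * B)
  have hi2 := (wick_integrable_exp (2 * t)).const_mul (B ^ 2)
  have hiA : Integrable (fun z => A ^ 2 + (2 * A * B) * rexp (t * z)) (gaussianReal 0 1) :=
    (integrable_const _).add hi1
  have hint : Integrable (fun z => A ^ 2 + (2 * A * B) * rexp (t * z)
      + B ^ 2 * rexp ((2 * t) * z)) (gaussianReal 0 1) := hiA.add hi2
  constructor
  · exact hint.congr (Filter.Eventually.of_forall fun z => (hexp z).symm)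
  · rw [show (fun z => (A + B * rexp (t * z)) ^ 2) = fun z => A ^ 2
      + (2 * A * B) * rexp (t * z) + B ^ 2 * rexp ((2 * t) * z) from funext hexp]
    rw [integral_add hiA hi2, integral_add (integrable_const _) hi1,
      integral_const, integral_const_mul, integral_const_mul, wick_integral_exp,
      wick_integral_exp]
    simp [measure_univ]

lemma wick_inner (u b c : ℝ) (N : ℕ) (hN : 1 ≤ N) :
    Integrable (fun z => (u + b * (rexp (c * z / Real.sqrt N - c ^ 2 / (2 * N)) - 1)) ^ 2)
      (gaussianReal 0 1) ∧
    ∫ z, (u + b * (rexp (c * z / Real.sqrt N - c ^ 2 / (2 * N)) - 1)) ^ 2 ∂(gaussianReal 0 1)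
      = u ^ 2 + b ^ 2 * (rexp (c ^ 2 / N) - 1) := by
  have hNpos : (0:ℝ) < N := by positivity
  set t : ℝ := c / Real.sqrt N with ht
  have ht2 : t ^ 2 = c ^ 2 / N := by
    rw [ht, div_pow, Real.sq_sqrt hNpos.le]
  have hptwise : ∀ z, u + b * (rexp (c * z / Real.sqrt N - c ^ 2 / (2 * N)) - 1)
      = (u - b) + (b * rexp (-(c ^ 2 / (2 * N)))) * rexp (t * z) := by
    intro z
    have : c * z / Real.sqrt N - c ^ 2 / (2 * N) = -(c ^ 2 / (2 * N)) + t * z := by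
      rw [ht]; ring
    rw [this, Real.exp_add]; ring
  have hsq : ∀ z, (u + b * (rexp (c * z / Real.sqrt N - c ^ 2 / (2 * N)) - 1)) ^ 2
      = ((u - b) + (b * rexp (-(c ^ 2 / (2 * N)))) * rexp (t * z)) ^ 2 := by
    intro z; rw [hptwise z]
  obtain ⟨hint, heq⟩ := wick_integral_sq (u - b) (b * rexp (-(c ^ 2 / (2 * N)))) t
  have e1 : rexp (-(c ^ 2 / (2 * N))) * rexp (t ^ 2 / 2) = 1 := by
    rw [← Real.exp_add, ht2, show -(c ^ 2 / (2 * (N:ℝ))) + (c ^ 2 / N) / 2 = 0 by ring,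
      Real.exp_zero]
  have e2 : rexp (-(c ^ 2 / (2 * N))) ^ 2 * rexp ((2 * t) ^ 2 / 2) = rexp (c ^ 2 / N) := by
    rw [sq (rexp _), ← Real.exp_add, ← Real.exp_add]
    congr 1
    rw [mul_pow, ht2]; ring
  constructor
  · exact hint.congr (Filter.Eventually.of_forall fun z => (hsq z).symm)
  · rw [show (fun z => (u + b * (rexp (c * z / Real.sqrt N - c ^ 2 / (2 * N)) - 1)) ^ 2)
      = fun z => ((u - b) + (b * rexp (-(c ^ 2 / (2 * N)))) * rexp (t * z)) ^ 2
      from funext hsq, heq]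
    have expand : (u - b) ^ 2 + 2 * (u - b) * (b * rexp (-(c ^ 2 / (2 * N))))
        * rexp (t ^ 2 / 2) + (b * rexp (-(c ^ 2 / (2 * N)))) ^ 2 * rexp ((2 * t) ^ 2 / 2)
        = (u - b) ^ 2 + 2 * (u - b) * b * (rexp (-(c ^ 2 / (2 * N))) * rexp (t ^ 2 / 2))
          + b ^ 2 * (rexp (-(c ^ 2 / (2 * N))) ^ 2 * rexp ((2 * t) ^ 2 / 2)) := by ring
    rw [expand, e1, e2]; ring

lemma wick_exp_bound {s : ℝ} (hs : 0 ≤ s) : rexp s - 1 ≤ s * rexp s := by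
  have h := Real.add_one_le_exp (-s)
  have h2 := mul_le_mul_of_nonneg_right h (Real.exp_pos s).le
  rw [← Real.exp_add, neg_add_cancel, Real.exp_zero] at h2
  nlinarith [Real.exp_pos s]

lemma wick_ptbound (N : ℕ) (hN : 1 ≤ N) (L₁ M₁ : ℝ) (σ σ' f : ℝ → ℝ)
    (hL₁ : ∀ x, |σ' x| ≤ L₁) (hfσ : ∀ x, f x * σ' x = σ x) (hM₁pos : 0 < M₁)
    (hM₁ : ∀ x, σ x ^ 2 ≤ M₁ * (1 + x ^ 2)) (u : ℝ) :
    u ^ 2 + f u ^ 2 * (rexp (σ' u ^ 2 / N) - 1)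
      ≤ u ^ 2 + M₁ * rexp (L₁ ^ 2 / N) / N * (1 + u ^ 2) := by
  have hNpos : (0:ℝ) < N := by positivity
  have hs : 0 ≤ σ' u ^ 2 / N := by positivity
  have h1 : rexp (σ' u ^ 2 / N) - 1 ≤ (σ' u ^ 2 / N) * rexp (σ' u ^ 2 / N) :=
    wick_exp_bound hs
  have hσ'sq : σ' u ^ 2 ≤ L₁ ^ 2 := by
    have h := hL₁ u
    nlinarith [abs_nonneg (σ' u), sq_abs (σ' u)]
  have hexp : rexp (σ' u ^ 2 / N) ≤ rexp (L₁ ^ 2 / N) :=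
    Real.exp_le_exp.mpr (div_le_div_of_nonneg_right hσ'sq hNpos.le)
  have key : f u ^ 2 * (rexp (σ' u ^ 2 / N) - 1)
      ≤ M₁ * rexp (L₁ ^ 2 / N) / N * (1 + u ^ 2) := by
    calc f u ^ 2 * (rexp (σ' u ^ 2 / N) - 1)
        ≤ f u ^ 2 * ((σ' u ^ 2 / N) * rexp (σ' u ^ 2 / N)) :=
          mul_le_mul_of_nonneg_left h1 (sq_nonneg _)
      _ = (f u * σ' u) ^ 2 / N * rexp (σ' u ^ 2 / N) := by rw [mul_pow]; ring
      _ = σ u ^ 2 / N * rexp (σ' u ^ 2 / N) := by rw [hfσ]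
      _ ≤ M₁ * (1 + u ^ 2) / N * rexp (L₁ ^ 2 / N) := by
          apply mul_le_mul (div_le_div_of_nonneg_right (hM₁ u) hNpos.le) hexp
            (Real.exp_pos _).le
          positivity
      _ = M₁ * rexp (L₁ ^ 2 / N) / N * (1 + u ^ 2) := by ring
  linarith


theorem wick_scheme_second_moment_bound {Ω : Type*} [MeasurableSpace Ω]
    (μ : Measure Ω) [IsProbabilityMeasure μ]
    (N : ℕ) (hN : 1 ≤ N) (a L₁ M₁ : ℝ)
    (σ σ' f : ℝ → ℝ)
    (hderiv : ∀ x, HasDerivAt σ (σ' x) x)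
    (hL₁ : ∀ x, |σ' x| ≤ L₁)
    (hf : Measurable f) (hfσ : ∀ x, f x * σ' x = σ x)
    (hM₁pos : 0 < M₁) (hM₁ : ∀ x, σ x ^ 2 ≤ M₁ * (1 + x ^ 2))
    (Z : ℕ → Ω → ℝ) (hZmeas : ∀ i, Measurable (Z i))
    (hiid : iIndepFun Z μ)
    (hZg : ∀ i, Measure.map (Z i) μ = gaussianReal 0 1)
    (x : ℕ → Ω → ℝ) (hx0 : ∀ ω, x 0 ω = a)
    (hxrec : ∀ k ω, x (k + 1) ω = x k ω + f (x k ω) *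
      (Real.exp (σ' (x k ω) * Z (k + 1) ω / Real.sqrt N - σ' (x k ω) ^ 2 / (2 * N)) - 1)) :
    ∀ k ≤ N, ∫ ω, (x k ω) ^ 2 ∂μ ≤
      (1 + M₁ * Real.exp (L₁ ^ 2 / N) / N) ^ k * (a ^ 2 + 1) - 1 := by
  -- measurability of σ'
  have hσ'meas : Measurable σ' := by
    have : σ' = deriv σ := funext fun y => ((hderiv y).deriv).symm
    rw [this]; exact measurable_deriv σ
  -- the one-step map
  set g2 : ℝ × ℝ → ℝ := fun p => p.1 + f p.1 *
    (rexp (σ' p.1 * p.2 / Real.sqrt N - σ' p.1 ^ 2 / (2 * N)) - 1) with hg2def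
  have hg2 : Measurable g2 := by
    have h1 : Measurable fun p : ℝ × ℝ =>
        σ' p.1 * p.2 / Real.sqrt N - σ' p.1 ^ 2 / (2 * N) :=
      (((hσ'meas.comp measurable_fst).mul measurable_snd).div_const _).sub
        (((hσ'meas.comp measurable_fst).pow_const 2).div_const _)
    exact measurable_fst.add ((hf.comp measurable_fst).mul
      ((Real.measurable_exp.comp h1).sub measurable_const))
  -- representation of x k as a measurable function of Z over Iic k
  have hrep : ∀ k, ∃ F : ({i // i ∈ Finset.Iic k} → ℝ) → ℝ,
      Measurable F ∧ ∀ ω, x k ω = F (fun i => Z i.1 ω) := by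
    intro k
    induction k with
    | zero => exact ⟨fun _ => a, measurable_const, fun ω => hx0 ω⟩
    | succ k ih =>
      obtain ⟨F, hF, hFx⟩ := ih
      refine ⟨fun v => g2 (F (fun i => v ⟨i.1,
          Finset.mem_Iic.mpr (le_trans (Finset.mem_Iic.mp i.2) (Nat.le_succ k))⟩),
          v ⟨k + 1, Finset.mem_Iic.mpr le_rfl⟩), ?_, ?_⟩
      · exact hg2.comp ((hF.comp (measurable_pi_lambda _ fun i =>
          measurable_pi_apply _)).prodMk (measurable_pi_apply _))
      · intro ω
        rw [hxrec k ω, hFx ω]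
  have hxmeas : ∀ k, Measurable (x k) := by
    intro k
    obtain ⟨F, hF, hFx⟩ := hrep k
    have : x k = F ∘ fun ω (i : {i // i ∈ Finset.Iic k}) => Z i.1 ω := funext hFx
    rw [this]
    exact hF.comp (measurable_pi_lambda _ fun i => hZmeas i.1)
  -- independence of x k and Z (k+1)
  have hind : ∀ k, IndepFun (x k) (Z (k + 1)) μ := by
    intro k
    obtain ⟨F, hF, hFx⟩ := hrep k
    have hdisj : Disjoint (Finset.Iic k) ({k + 1} : Finset ℕ) := by
      rw [Finset.disjoint_singleton_right, Finset.mem_Iic]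
      omega
    have h := hiid.indepFun_finset (Finset.Iic k) {k + 1} hdisj hZmeas
    have h2 := h.comp hF
      (measurable_pi_apply (⟨k + 1, Finset.mem_singleton_self _⟩ :
        {i // i ∈ ({k + 1} : Finset ℕ)}))
    have hx_eq : x k = F ∘ fun ω (i : {i // i ∈ Finset.Iic k}) => Z i.1 ω := funext hFx
    rw [hx_eq]
    exact h2
  -- notation
  set q : ℝ := M₁ * rexp (L₁ ^ 2 / N) / N with hqdef
  have hq0 : 0 ≤ q := by positivity
  set q' : ENNReal := ENNReal.ofReal q with hq'def
  set L : ℕ → ENNReal := fun k => ∫⁻ ω, ENNReal.ofReal ((x k ω) ^ 2) ∂μ with hLdef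
  -- key induction in ℝ≥0∞
  have key : ∀ k, L k + 1 ≤ (1 + q') ^ k * (ENNReal.ofReal (a ^ 2) + 1) := by
    intro k
    induction k with
    | zero =>
      simp only [hLdef, pow_zero, one_mul]
      have : (fun ω => ENNReal.ofReal ((x 0 ω) ^ 2)) =
          fun _ => ENNReal.ofReal (a ^ 2) := by
        funext ω; rw [hx0 ω]
      rw [this, lintegral_const, measure_univ, mul_one]
    | succ k ih =>
      haveI : IsProbabilityMeasure (μ.map (x k)) :=
        Measure.isProbabilityMeasure_map (hxmeas k).aemeasurable
      set H : ℝ × ℝ → ENNReal := fun p => ENNReal.ofReal ((g2 p) ^ 2) with hHdef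
      have hH : Measurable H := ENNReal.measurable_ofReal.comp (hg2.pow_const 2)
      have hmap : μ.map (fun ω => (x k ω, Z (k + 1) ω)) =
          (μ.map (x k)).prod (gaussianReal 0 1) := by
        rw [← hZg (k + 1)]
        exact (indepFun_iff_map_prod_eq_prod_map_map (hxmeas k).aemeasurable
          ((hZmeas (k + 1)).aemeasurable)).mp (hind k)
      have hmm : Measurable fun u : ℝ => ENNReal.ofReal (u ^ 2) :=
        ENNReal.measurable_ofReal.comp (measurable_id.pow_const 2)
      have step1 : L (k + 1) = ∫⁻ p, H p ∂((μ.map (x k)).prod (gaussianReal 0 1)) := by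
        have e : L (k + 1) = ∫⁻ ω, H (x k ω, Z (k + 1) ω) ∂μ := by
          refine lintegral_congr fun ω => ?_
          rw [hHdef]
          simp only [hg2def]
          rw [hxrec k ω]
        rw [e, ← lintegral_map hH ((hxmeas k).prodMk (hZmeas (k + 1))), hmap]
      have step2 : ∫⁻ p, H p ∂((μ.map (x k)).prod (gaussianReal 0 1)) =
          ∫⁻ u, ∫⁻ z, H (u, z) ∂(gaussianReal 0 1) ∂(μ.map (x k)) :=
        lintegral_prod H hH.aemeasurable
      have inner_bound : ∀ u : ℝ, ∫⁻ z, H (u, z) ∂(gaussianReal 0 1) ≤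
          (1 + q') * ENNReal.ofReal (u ^ 2) + q' := by
        intro u
        obtain ⟨hint, heq⟩ := wick_inner u (f u) (σ' u) N hN
        have h0 : ∫⁻ z, H (u, z) ∂(gaussianReal 0 1) = ENNReal.ofReal
            (∫ z, (u + f u * (rexp (σ' u * z / Real.sqrt N - σ' u ^ 2 / (2 * N)) - 1)) ^ 2
              ∂(gaussianReal 0 1)) :=
          (ofReal_integral_eq_lintegral_ofReal hint
            (Filter.Eventually.of_forall fun z => sq_nonneg _)).symm
        rw [h0, heq]
        calc ENNReal.ofReal (u ^ 2 + f u ^ 2 * (rexp (σ' u ^ 2 / N) - 1))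
            ≤ ENNReal.ofReal (u ^ 2 + q * (1 + u ^ 2)) := by
              apply ENNReal.ofReal_le_ofReal
              have := wick_ptbound N hN L₁ M₁ σ σ' f hL₁ hfσ hM₁pos hM₁ u
              linarith
          _ = ENNReal.ofReal (u ^ 2) + ENNReal.ofReal q * (1 + ENNReal.ofReal (u ^ 2)) := by
              rw [ENNReal.ofReal_add (sq_nonneg u) (by positivity),
                ENNReal.ofReal_mul hq0, ENNReal.ofReal_add zero_le_one (sq_nonneg u),
                ENNReal.ofReal_one]
          _ = (1 + q') * ENNReal.ofReal (u ^ 2) + q' := by rw [hq'def]; ring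
      have step3 : ∫⁻ u, ∫⁻ z, H (u, z) ∂(gaussianReal 0 1) ∂(μ.map (x k)) ≤
          (1 + q') * L k + q' := by
        calc ∫⁻ u, ∫⁻ z, H (u, z) ∂(gaussianReal 0 1) ∂(μ.map (x k))
            ≤ ∫⁻ u, ((1 + q') * ENNReal.ofReal (u ^ 2) + q') ∂(μ.map (x k)) :=
              lintegral_mono inner_bound
          _ = (1 + q') * (∫⁻ u, ENNReal.ofReal (u ^ 2) ∂(μ.map (x k))) + q' := by
              rw [lintegral_add_right _ measurable_const, lintegral_const, measure_univ,
                mul_one, lintegral_const_mul _ hmm]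
          _ = (1 + q') * L k + q' := by
              rw [lintegral_map hmm (hxmeas k)]
      have hstep : L (k + 1) + 1 ≤ (1 + q') * (L k + 1) := by
        rw [step1, step2]
        calc (∫⁻ u, ∫⁻ z, H (u, z) ∂(gaussianReal 0 1) ∂(μ.map (x k))) + 1
            ≤ (1 + q') * L k + q' + 1 := add_le_add_left step3 1
          _ = (1 + q') * (L k + 1) := by ring
      calc L (k + 1) + 1 ≤ (1 + q') * (L k + 1) := hstep
        _ ≤ (1 + q') * ((1 + q') ^ k * (ENNReal.ofReal (a ^ 2) + 1)) :=
            mul_le_mul_right ih _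
        _ = (1 + q') ^ (k + 1) * (ENNReal.ofReal (a ^ 2) + 1) := by ring
  -- conclusion
  intro k _
  have hbd : L k + 1 ≤ ENNReal.ofReal ((1 + q) ^ k * (a ^ 2 + 1)) := by
    calc L k + 1 ≤ (1 + q') ^ k * (ENNReal.ofReal (a ^ 2) + 1) := key k
      _ = ENNReal.ofReal ((1 + q) ^ k * (a ^ 2 + 1)) := by
          have h1 : ENNReal.ofReal ((1 + q) ^ k) = (1 + q') ^ k := by
            rw [ENNReal.ofReal_pow (by positivity : (0:ℝ) ≤ 1 + q),
              ENNReal.ofReal_add zero_le_one hq0, ENNReal.ofReal_one]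
          rw [ENNReal.ofReal_mul (by positivity : (0:ℝ) ≤ (1 + q) ^ k), h1,
            ENNReal.ofReal_add (sq_nonneg a) zero_le_one, ENNReal.ofReal_one]
  have hLne : L k ≠ ⊤ := by
    intro h
    rw [h] at hbd
    simp at hbd
  have hint_eq : ∫ ω, (x k ω) ^ 2 ∂μ = (L k).toReal := by
    rw [hLdef]
    exact integral_eq_lintegral_of_nonneg_ae (Filter.Eventually.of_forall fun ω => sq_nonneg _)
      ((hxmeas k).pow_const 2).aestronglyMeasurable
  have htr := ENNReal.toReal_mono ENNReal.ofReal_ne_top hbd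
  rw [ENNReal.toReal_add hLne ENNReal.one_ne_top, ENNReal.toReal_one,
    ENNReal.toReal_ofReal (by positivity)] at htr
  rw [hint_eq]
  linarith
end

section
/- Let Z be standard Gaussian, c ∈ ℝ with |c| ≤ L, and t > 0. Then E[(exp{c√t Z - c²t/2} - 1 - c√t Z - (c²t/2)(Z²-1))²] ≤ c²t (exp{L²t} - 1 - L²t). -/
open MeasureTheory ProbabilityTheory Real Filter
open scoped ENNReal NNReal

lemma intZero : ∫ x : ℝ, Real.exp (-x^2/2) = Real.sqrt (2*π) := by
  have h := integral_gaussian (1/2 : ℝ)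
  rw [show (fun x : ℝ => Real.exp (-(1/2) * x^2)) = fun x : ℝ => Real.exp (-x^2/2) by
    ext x; ring_nf] at h
  rw [h]; rw [show π / (1/2) = 2*π by ring]

lemma odd_int (f : ℝ → ℝ) (hf : ∀ x, f (-x) = - f x) : ∫ x, f x = 0 := by
  have h1 : ∫ x, f x = ∫ x, f (-x) := by
    conv_lhs => rw [← Measure.map_neg_eq_self (volume : Measure ℝ)]
    exact MeasureTheory.integral_map_equiv (MeasurableEquiv.neg ℝ) f
  have h2 : ∫ x, f (-x) = - ∫ x, f x := by
    simp only [hf]; exact integral_neg f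
  linarith

lemma intMom (k : ℕ) : Integrable (fun x : ℝ => x^k * Real.exp (-x^2/2)) := by
  have := integrable_rpow_mul_exp_neg_mul_sq (b := 1/2) (by norm_num) (s := (k:ℝ))
    (by exact_mod_cast neg_one_lt_zero.trans_le (Nat.cast_nonneg k))
  rw [show (fun x : ℝ => x ^ (k:ℝ) * Real.exp (-(1/2) * x^2))
      = fun x : ℝ => x^k * Real.exp (-x^2/2) by ext x; rw [Real.rpow_natCast]; ring_nf] at this
  exact this

lemma gammaHalf32 : Real.Gamma (3/2) = Real.sqrt π / 2 := by
  have : (3/2 : ℝ) = 1/2 + 1 := by norm_num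
  rw [this, Real.Gamma_add_one (by norm_num), Real.Gamma_one_half_eq]; ring

lemma gammaHalf52 : Real.Gamma (5/2) = 3 * Real.sqrt π / 4 := by
  have : (5/2 : ℝ) = 3/2 + 1 := by norm_num
  rw [this, Real.Gamma_add_one (by norm_num), gammaHalf32]; ring

lemma momIoi (q : ℝ) (hq : -1 < q) : ∫ x in Set.Ioi (0:ℝ), x^q * Real.exp (-x^2/2)
    = (1/2:ℝ) ^ (-(q+1)/2) * (1/2) * Real.Gamma ((q+1)/2) := by
  have h2 := integral_rpow_mul_exp_neg_mul_rpow (p := 2) (q := q) (b := 1/2)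
    (by norm_num) hq (by norm_num)
  rw [← h2]
  refine setIntegral_congr_fun measurableSet_Ioi (fun x hx => ?_)
  rw [show x ^ (2:ℝ) = x ^ (2:ℕ) from Real.rpow_natCast x 2]
  ring_nf
lemma halfRpow (r : ℝ) : (1/2:ℝ) ^ (-r) = (2:ℝ) ^ r := by
  rw [one_div, Real.inv_rpow (by norm_num), Real.rpow_neg (by norm_num), inv_inv]

lemma momTwo' : ∫ x : ℝ, x^2 * Real.exp (-x^2/2) = Real.sqrt (2*π) := by
  have habs : ∫ x : ℝ, |x|^2 * Real.exp (-|x|^2/2)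
      = 2 * ∫ x in Set.Ioi (0:ℝ), x^2 * Real.exp (-x^2/2) :=
    integral_comp_abs (f := fun x => x^2 * Real.exp (-x^2/2))
  simp only [sq_abs] at habs
  rw [habs]
  have h := momIoi 2 (by norm_num)
  rw [show ∫ x in Set.Ioi (0:ℝ), x^2 * Real.exp (-x^2/2)
      = ∫ x in Set.Ioi (0:ℝ), x^(2:ℝ) * Real.exp (-x^2/2) from
    (setIntegral_congr_fun measurableSet_Ioi (fun x hx => by
      rw [show x ^ (2:ℝ) = x ^ (2:ℕ) from Real.rpow_natCast x 2])).symm, h]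
  rw [show (-(2+1)/2 : ℝ) = -(3/2) by norm_num, halfRpow, show ((2:ℝ)+1)/2 = 3/2 by norm_num,
    gammaHalf32]
  rw [show (3/2 : ℝ) = 1 + 1/2 by norm_num, Real.rpow_add (by norm_num), Real.rpow_one,
    ← Real.sqrt_eq_rpow, Real.sqrt_mul (by norm_num)]
  ring

lemma abs_pow_four (x : ℝ) : |x|^4 = x^4 := by
  rw [show (4:ℕ) = 2*2 by norm_num, pow_mul, pow_mul, sq_abs]

lemma momFour : ∫ x : ℝ, x^4 * Real.exp (-x^2/2) = 3 * Real.sqrt (2*π) := by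
  have habs : ∫ x : ℝ, |x|^4 * Real.exp (-|x|^2/2)
      = 2 * ∫ x in Set.Ioi (0:ℝ), x^4 * Real.exp (-x^2/2) :=
    integral_comp_abs (f := fun x => x^4 * Real.exp (-x^2/2))
  simp only [sq_abs, abs_pow_four] at habs
  rw [habs]
  have h := momIoi 4 (by norm_num)
  rw [show ∫ x in Set.Ioi (0:ℝ), x^4 * Real.exp (-x^2/2)
      = ∫ x in Set.Ioi (0:ℝ), x^(4:ℝ) * Real.exp (-x^2/2) from
    (setIntegral_congr_fun measurableSet_Ioi (fun x hx => by
      rw [show x ^ (4:ℝ) = x ^ (4:ℕ) from Real.rpow_natCast x 4])).symm, h]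
  rw [show (-(4+1)/2 : ℝ) = -(5/2) by norm_num, halfRpow, show ((4:ℝ)+1)/2 = 5/2 by norm_num,
    gammaHalf52]
  rw [show (5/2 : ℝ) = 2 + 1/2 by norm_num, Real.rpow_add (by norm_num),
    ← Real.sqrt_eq_rpow, Real.sqrt_mul (by norm_num),
    show ((2:ℝ) ^ (2:ℝ)) = 4 by
      rw [show (2:ℝ) = ((2:ℕ):ℝ) from rfl, Real.rpow_natCast]; norm_num]
  ring
lemma oddOne : ∫ z : ℝ, z * Real.exp (-z^2/2) = 0 := by
  apply odd_int; intro x; rw [neg_sq]; ring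

lemma oddThree : ∫ z : ℝ, z^3 * Real.exp (-z^2/2) = 0 := by
  apply odd_int; intro x; rw [neg_sq, Odd.neg_pow (by decide)]; ring

lemma intG : Integrable (fun z : ℝ => Real.exp (-z^2/2)) := by
  simpa using intMom 0

lemma polyG_integrable (A B C D E : ℝ) :
    Integrable (fun z : ℝ => (A + B*z + C*z^2 + D*z^3 + E*z^4) * Real.exp (-z^2/2)) := by
  have h0 := (intMom 0).const_mul A
  have h1 := (intMom 1).const_mul B
  have h2 := (intMom 2).const_mul C
  have h3 := (intMom 3).const_mul D
  have h4 := (intMom 4).const_mul E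
  have := (((h0.add h1).add h2).add h3).add h4
  refine this.congr (ae_of_all _ fun z => ?_)
  simp only [Pi.add_apply]; ring

lemma polyG_int (A B C D E : ℝ) :
    ∫ z : ℝ, (A + B*z + C*z^2 + D*z^3 + E*z^4) * Real.exp (-z^2/2)
      = (A + C + 3*E) * Real.sqrt (2*π) := by
  have h0 := (intMom 0).const_mul A
  have h1 := (intMom 1).const_mul B
  have h2 := (intMom 2).const_mul C
  have h3 := (intMom 3).const_mul D
  have h4 := (intMom 4).const_mul E
  have key : ∫ z : ℝ, (A + B*z + C*z^2 + D*z^3 + E*z^4) * Real.exp (-z^2/2)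
      = ∫ z : ℝ, (A * (z^0 * Real.exp (-z^2/2)) + B * (z^1 * Real.exp (-z^2/2))
        + C * (z^2 * Real.exp (-z^2/2)) + D * (z^3 * Real.exp (-z^2/2))
        + E * (z^4 * Real.exp (-z^2/2))) := by
    congr 1; funext z; ring
  rw [key]
  have h01 : Integrable (fun z : ℝ => A * (z^0 * Real.exp (-z^2/2)) + B * (z^1 * Real.exp (-z^2/2))) := h0.add h1
  have h02 : Integrable (fun z : ℝ => A * (z^0 * Real.exp (-z^2/2)) + B * (z^1 * Real.exp (-z^2/2)) + C * (z^2 * Real.exp (-z^2/2))) := h01.add h2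
  have h03 : Integrable (fun z : ℝ => A * (z^0 * Real.exp (-z^2/2)) + B * (z^1 * Real.exp (-z^2/2)) + C * (z^2 * Real.exp (-z^2/2)) + D * (z^3 * Real.exp (-z^2/2))) := h02.add h3
  rw [integral_add h03 h4, integral_add h02 h3, integral_add h01 h2, integral_add h0 h1]
  rw [integral_const_mul, integral_const_mul, integral_const_mul, integral_const_mul,
    integral_const_mul]
  have e0 : ∫ z : ℝ, z^0 * Real.exp (-z^2/2) = Real.sqrt (2*π) := by
    simpa using intZero
  have e1 : ∫ z : ℝ, z^1 * Real.exp (-z^2/2) = 0 := by simpa using oddOne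
  rw [e0, e1, momTwo', oddThree, momFour]
  ring
lemma gauss_eq (g : ℝ → ℝ) :
    ∫ z, g z ∂(gaussianReal 0 1)
      = (Real.sqrt (2*π))⁻¹ * ∫ z : ℝ, g z * Real.exp (-z^2/2) := by
  rw [gaussianReal_of_var_ne_zero 0 one_ne_zero, gaussianPDF_def]
  have hrw : (fun x => ENNReal.ofReal (gaussianPDFReal 0 1 x))
      = fun x => ((Real.toNNReal (gaussianPDFReal 0 1 x) : ℝ≥0) : ℝ≥0∞) := rfl
  rw [hrw, integral_withDensity_eq_integral_smul
    ((measurable_gaussianPDFReal 0 1).real_toNNReal), ← integral_const_mul]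
  congr 1; funext z
  rw [NNReal.smul_def, Real.coe_toNNReal _ (gaussianPDFReal_nonneg 0 1 z)]
  simp only [gaussianPDFReal, NNReal.coe_one, mul_one, sub_zero, smul_eq_mul]
  ring
lemma master (a : ℝ) :
    ∫ z, (Real.exp (a*z - a^2/2) - 1 - a*z - a^2/2*(z^2-1))^2 ∂(gaussianReal 0 1)
      = Real.exp (a^2) - 1 - a^2 - a^4/2 := by
  rw [gauss_eq]
  set A2 : ℝ := (1-a^2/2)^2
  set B2 : ℝ := 2*a*(1-a^2/2)
  set C2 : ℝ := a^2 + 2*(1-a^2/2)*(a^2/2)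
  set D2 : ℝ := 2*a*(a^2/2)
  set E2 : ℝ := (a^2/2)^2
  set F2 : ℝ → ℝ := fun w => ((1 + a^2/2 + a^4/2) + (a + a^3)*w + (a^2/2)*w^2 + 0*w^3 + 0*w^4)
    * Real.exp (-w^2/2) with hF2
  have hpt : (fun z : ℝ => (Real.exp (a*z - a^2/2) - 1 - a*z - a^2/2*(z^2-1))^2
        * Real.exp (-z^2/2))
      = fun z : ℝ => Real.exp (a^2) * Real.exp (-(z - 2*a)^2/2) - 2 * F2 (z - a)
        + (A2 + B2*z + C2*z^2 + D2*z^3 + E2*z^4) * Real.exp (-z^2/2) := by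
    funext z
    have h1 : Real.exp (a*z - a^2/2) ^ 2 * Real.exp (-z^2/2)
        = Real.exp (a^2) * Real.exp (-(z - 2*a)^2/2) := by
      rw [sq, ← Real.exp_add, ← Real.exp_add, ← Real.exp_add, Real.exp_eq_exp]; ring
    have h2 : Real.exp (a*z - a^2/2) * Real.exp (-z^2/2) = Real.exp (-(z - a)^2/2) := by
      rw [← Real.exp_add, Real.exp_eq_exp]; ring
    simp only [hF2, A2, B2, C2, D2, E2]
    linear_combination h1 - 2 * (1 + a*z + a^2/2*(z^2-1)) * h2
  rw [hpt]
  have intF1 : Integrable (fun z : ℝ => Real.exp (a^2) * Real.exp (-(z - 2*a)^2/2)) :=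
    (intG.comp_sub_right (2*a)).const_mul _
  have intF2 : Integrable F2 := polyG_integrable _ _ _ _ _
  have intW : Integrable (fun z : ℝ => F2 (z - a)) := intF2.comp_sub_right a
  have intW2 : Integrable (fun z : ℝ => 2 * F2 (z - a)) := intW.const_mul 2
  have intP2 : Integrable (fun z : ℝ =>
      (A2 + B2*z + C2*z^2 + D2*z^3 + E2*z^4) * Real.exp (-z^2/2)) := polyG_integrable _ _ _ _ _
  have intSub : Integrable (fun z : ℝ => Real.exp (a^2) * Real.exp (-(z - 2*a)^2/2)
      - 2 * F2 (z - a)) := intF1.sub intW2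
  rw [integral_add intSub intP2, integral_sub intF1 intW2, integral_const_mul,
    integral_const_mul, integral_sub_right_eq_self (fun z : ℝ => Real.exp (-z^2/2)) (2*a),
    integral_sub_right_eq_self F2 a, intZero, hF2, polyG_int, polyG_int]
  have hK : Real.sqrt (2*π) ≠ 0 := by positivity
  field_simp
  ring
lemma expMono {s u : ℝ} (hs : 0 ≤ s) (hsu : s ≤ u) :
    Real.exp s - 1 - s ≤ Real.exp u - 1 - u := by
  have h1 : (u - s) + 1 ≤ Real.exp (u - s) := Real.add_one_le_exp (u - s)
  have h2 : (1:ℝ) ≤ Real.exp s := by simpa using Real.exp_le_exp.mpr hs |>.trans_eq rfl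
  have h3 : Real.exp u = Real.exp s * Real.exp (u - s) := by
    rw [← Real.exp_add]; ring_nf
  nlinarith [Real.exp_pos s, Real.exp_pos (u - s)]

lemma keyIneq {x y : ℝ} (hx : 0 ≤ x) (hxy : x ≤ y) :
    Real.exp x - 1 - x - x^2/2 ≤ x * (Real.exp y - 1 - y) := by
  set K := Real.exp y - 1 - y with hK
  set ψ : ℝ → ℝ := fun s => s * K - (Real.exp s - 1 - s - s^2/2) with hψ
  have hderiv : ∀ s : ℝ, HasDerivAt ψ (K - (Real.exp s - 1 - s)) s := by
    intro s
    have h1 : HasDerivAt (fun s : ℝ => s * K) K s := by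
      simpa using (hasDerivAt_id s).mul_const K
    have h2 := (((Real.hasDerivAt_exp s).sub_const 1).sub (hasDerivAt_id s)).sub
        ((hasDerivAt_pow 2 s).div_const 2)
    have := h1.sub h2
    refine this.congr_deriv ?_
    norm_num
  have hmono : MonotoneOn ψ (Set.Icc 0 y) := by
    apply monotoneOn_of_deriv_nonneg (convex_Icc 0 y)
      (Continuous.continuousOn (by fun_prop))
    · intro s hs
      exact (hderiv s).differentiableAt.differentiableWithinAt
    · intro s hs
      rw [(hderiv s).deriv]
      rw [interior_Icc] at hs
      have := expMono hs.1.le hs.2.le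
      simp only [hK]
      linarith
  have h0 : ψ 0 ≤ ψ x := hmono (by constructor <;> [rfl; linarith]) ⟨hx, hxy⟩ hx
  simp only [hψ] at h0
  simp only [Real.exp_zero] at h0
  linarith
theorem wick_exponential_remainder_L2_bound (c t L : ℝ) (hc : |c| ≤ L) (ht : 0 < t) :
    ∫ z, (Real.exp (c * Real.sqrt t * z - c ^ 2 * t / 2) - 1 - c * Real.sqrt t * z -
        c ^ 2 * t / 2 * (z ^ 2 - 1)) ^ 2 ∂(gaussianReal 0 1)
      ≤ c ^ 2 * t * (Real.exp (L ^ 2 * t) - 1 - L ^ 2 * t) := by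
  set a : ℝ := c * Real.sqrt t with ha
  have ha2 : a ^ 2 = c ^ 2 * t := by
    rw [ha, mul_pow, Real.sq_sqrt ht.le]
  have hgoal : ∫ z, (Real.exp (c * Real.sqrt t * z - c ^ 2 * t / 2) - 1 - c * Real.sqrt t * z -
      c ^ 2 * t / 2 * (z ^ 2 - 1)) ^ 2 ∂(gaussianReal 0 1)
      = Real.exp (a^2) - 1 - a^2 - a^4/2 := by
    rw [← master a]
    congr 1; funext z
    rw [ha2]
  rw [hgoal, ha2]
  have hx : 0 ≤ c ^ 2 * t := by positivity
  have hxy : c ^ 2 * t ≤ L ^ 2 * t := by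
    have : c ^ 2 ≤ L ^ 2 := by
      have := abs_nonneg c
      nlinarith [sq_abs c]
    nlinarith
  have := keyIneq hx hxy
  have h4 : a^4 = (c^2*t)^2 := by rw [show a^4 = (a^2)^2 by ring, ha2]
  rw [h4]
  linarith
end
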